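/- arXiv:2006.11266 — 2 statements merged into one kernel-verified Lean document; each statement's English description precedes it below -/
import Mathlib

section
/- Fix θ₀ ∈ ℝ^d. The gradient at θ = θ₀ of the map θ ↦ Σ_s d(s) · V_{π_{θ₀}}(s) · KL(Qπ_{θ₀}(·|s) ‖ π_θ(·|s)) equals −Σ_s d(s) Σ_a Q(s,a) π_{θ₀}(a|s) ∇_θ log π_θ(a|s)|_{θ=θ₀}, i.e., minimizing the V-weighted per-state KL to the improved conditional policy by one gradient step reproduces the policy-gradient-theorem update. -/
/-- Value function `V_μ(s) = ∑ a, Q(s,a) * μ(a|s)`. -/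
noncomputable def Vval {S A : Type*} [Fintype A] (Q : S → A → ℝ) (μ : S → A → ℝ) (s : S) : ℝ :=
  ∑ a, Q s a * μ s a

/-- Improved conditional policy `Qμ(a|s) = Q(s,a) * μ(a|s) / V_μ(s)`. -/
noncomputable def impCond {S A : Type*} [Fintype A] (Q : S → A → ℝ) (μ : S → A → ℝ)
    (s : S) (a : A) : ℝ :=
  Q s a * μ s a / Vval Q μ s

/-- KL divergence between pmfs on a finite type (with `0 * log 0 = 0`). -/
noncomputable def klDiv {A : Type*} [Fintype A] (p q : A → ℝ) : ℝ :=
  ∑ a, p a * Real.log (p a / q a)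

section helpers

variable {F : Type*} [NormedAddCommGroup F] [InnerProductSpace ℝ F] [CompleteSpace F] {x : F}

lemma hasGradientAt_sum' {ι : Type*} (t : Finset ι) {f : ι → F → ℝ} {g : ι → F}
    (h : ∀ i ∈ t, HasGradientAt (f i) (g i) x) :
    HasGradientAt (fun θ => ∑ i ∈ t, f i θ) (∑ i ∈ t, g i) x := by
  rw [hasGradientAt_iff_hasFDerivAt, map_sum]
  exact HasFDerivAt.fun_sum fun i hi => (h i hi).hasFDerivAt

lemma hasGradientAt_const_mul' {f : F → ℝ} {g : F} (c : ℝ) (h : HasGradientAt f g x) :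
    HasGradientAt (fun θ => c * f θ) (c • g) x := by
  rw [hasGradientAt_iff_hasFDerivAt, map_smul]
  exact (h.hasFDerivAt.const_mul c)

lemma hasGradientAt_sub' {f₁ f₂ : F → ℝ} {g₁ g₂ : F} (h₁ : HasGradientAt f₁ g₁ x)
    (h₂ : HasGradientAt f₂ g₂ x) : HasGradientAt (fun θ => f₁ θ - f₂ θ) (g₁ - g₂) x := by
  rw [hasGradientAt_iff_hasFDerivAt, map_sub]
  exact h₁.hasFDerivAt.sub h₂.hasFDerivAt

end helpers

/-- The gradient at `θ = θ₀` of
`θ ↦ ∑ s, d(s) * V_{π_{θ₀}}(s) * KL(Qπ_{θ₀}(·|s) ‖ π_θ(·|s))` equals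
`-∑ s, d(s) ∑ a, Q(s,a) π_{θ₀}(a|s) • ∇ log π_θ(a|s)|_{θ₀}`, reproducing the
policy-gradient-theorem update. -/
theorem operator_reinforce_state_action
    {S A : Type*} [Fintype S] [Fintype A] [Nonempty S] [Nonempty A] {n : ℕ}
    (d : S → ℝ) (hd : ∀ s, 0 ≤ d s)
    (Q : S → A → ℝ) (hQ : ∀ s a, 0 < Q s a)
    (π : EuclideanSpace ℝ (Fin n) → S → A → ℝ)
    (hπpos : ∀ θ s a, 0 < π θ s a)
    (hπsum : ∀ θ s, ∑ a, π θ s a = 1)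
    (hπdiff : ∀ s a, Differentiable ℝ (fun θ => π θ s a))
    (θ₀ : EuclideanSpace ℝ (Fin n)) :
    gradient
        (fun θ => ∑ s, d s * Vval Q (π θ₀) s * klDiv (impCond Q (π θ₀) s) (π θ s)) θ₀
      = -∑ s, d s • ∑ a, (Q s a * π θ₀ s a) • gradient (fun θ => Real.log (π θ s a)) θ₀ := by
  have hV : ∀ s, 0 < Vval Q (π θ₀) s := fun s =>
    Finset.sum_pos (fun a _ => mul_pos (hQ s a) (hπpos θ₀ s a)) Finset.univ_nonempty
  set c : S → A → ℝ := fun s a => d s * Q s a * π θ₀ s a with hc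
  set L : S → A → ℝ := fun s a => Real.log (impCond Q (π θ₀) s a) with hL
  -- rewrite the objective
  have hfun : (fun θ => ∑ s, d s * Vval Q (π θ₀) s * klDiv (impCond Q (π θ₀) s) (π θ s))
      = fun θ => ∑ s, ∑ a, (c s a * L s a - c s a * Real.log (π θ s a)) := by
    funext θ
    refine Finset.sum_congr rfl fun s _ => ?_
    rw [klDiv, Finset.mul_sum]
    refine Finset.sum_congr rfl fun a _ => ?_
    have hp : 0 < impCond Q (π θ₀) s a :=
      div_pos (mul_pos (hQ s a) (hπpos θ₀ s a)) (hV s)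
    rw [Real.log_div hp.ne' (hπpos θ s a).ne']
    have hVc : Vval Q (π θ₀) s * impCond Q (π θ₀) s a = Q s a * π θ₀ s a := by
      rw [impCond, mul_div_cancel₀ _ (hV s).ne']
    have key : d s * Vval Q (π θ₀) s * (impCond Q (π θ₀) s a
        * (Real.log (impCond Q (π θ₀) s a) - Real.log (π θ s a)))
        = c s a * (L s a - Real.log (π θ s a)) := by
      rw [hc, hL]
      calc d s * Vval Q (π θ₀) s * (impCond Q (π θ₀) s a
            * (Real.log (impCond Q (π θ₀) s a) - Real.log (π θ s a)))
          = d s * (Vval Q (π θ₀) s * impCond Q (π θ₀) s a)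
            * (Real.log (impCond Q (π θ₀) s a) - Real.log (π θ s a)) := by ring
        _ = d s * Q s a * π θ₀ s a
            * (Real.log (impCond Q (π θ₀) s a) - Real.log (π θ s a)) := by rw [hVc]; ring
    rw [key, mul_sub]
  rw [hfun]
  have hgrad : HasGradientAt
      (fun θ => ∑ s, ∑ a, (c s a * L s a - c s a * Real.log (π θ s a)))
      (∑ s, ∑ a : A, ((0 : EuclideanSpace ℝ (Fin n))
        - c s a • gradient (fun θ => Real.log (π θ s a)) θ₀)) θ₀ := by
    refine hasGradientAt_sum' _ fun s _ => hasGradientAt_sum' _ fun a _ => ?_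
    exact hasGradientAt_sub' (hasGradientAt_const θ₀ (c s a * L s a))
      (hasGradientAt_const_mul' (c s a)
        (((hπdiff s a θ₀).log (hπpos θ₀ s a).ne').hasGradientAt)
      )
  rw [hgrad.gradient]
  rw [← Finset.sum_neg_distrib]
  refine Finset.sum_congr rfl fun s _ => ?_
  rw [Finset.smul_sum, ← Finset.sum_neg_distrib]
  refine Finset.sum_congr rfl fun a _ => ?_
  rw [zero_sub, smul_smul, hc]
  ring_nf
end

section
/- If θ* ∈ ℝ^d satisfies Σ_s d(s) Σ_a Q(s,a) π_{θ*}(a|s) ∇_θ log π_θ(a|s)|_{θ=θ*} = 0 (i.e., the policy-gradient update vanishes at θ*, as it does at an optimal policy by the policy gradient theorem), then θ* is a critical point of the map θ ↦ Σ_s d(s) · V_{π_{θ*}}(s) · KL(Qπ_{θ*}(·|s) ‖ π_θ(·|s)); that is, the gradient of this map at θ = θ* is zero. -/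
open InnerProductSpace


/-- If the policy-gradient update vanishes at `θ*`, then `θ*` is a critical point of
`θ ↦ ∑ s, d(s) * V_{π_{θ*}}(s) * KL(Qπ_{θ*}(·|s) ‖ π_θ(·|s))`. -/
theorem fixed_point_operator_reinforce_state_action
    {S A : Type*} [Fintype S] [Fintype A] [Nonempty S] [Nonempty A] {n : ℕ}
    (d : S → ℝ) (hd : ∀ s, 0 ≤ d s)
    (Q : S → A → ℝ) (hQ : ∀ s a, 0 < Q s a)
    (π : EuclideanSpace ℝ (Fin n) → S → A → ℝ)
    (hπpos : ∀ θ s a, 0 < π θ s a)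
    (hπsum : ∀ θ s, ∑ a, π θ s a = 1)
    (hπdiff : ∀ s a, Differentiable ℝ (fun θ => π θ s a))
    (θs : EuclideanSpace ℝ (Fin n))
    (hstat : ∑ s, d s • ∑ a, (Q s a * π θs s a) • gradient (fun θ => Real.log (π θ s a)) θs
      = 0) :
    gradient
        (fun θ => ∑ s, d s * Vval Q (π θs) s * klDiv (impCond Q (π θs) s) (π θ s)) θs
      = 0 := by
  simp only [Vval, impCond, klDiv]
  set V : S → ℝ := fun s => ∑ a, Q s a * π θs s a with hVdef
  have hV : ∀ s, 0 < V s := fun s =>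
    Finset.sum_pos (fun a _ => mul_pos (hQ s a) (hπpos θs s a)) Finset.univ_nonempty
  set p : S → A → ℝ := fun s a => Q s a * π θs s a / V s with hpdef
  have hp : ∀ s a, 0 < p s a := fun s a => div_pos (mul_pos (hQ s a) (hπpos θs s a)) (hV s)
  set c : S → A → ℝ := fun s a => d s * (Q s a * π θs s a) with hcdef
  have hVp : ∀ s a, V s * p s a = Q s a * π θs s a := fun s a =>
    mul_div_cancel₀ _ (hV s).ne'
  have hFeq : (fun θ => ∑ s, d s * V s * (∑ a, p s a * Real.log (p s a / π θ s a)))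
      = fun θ => (∑ s, ∑ a, c s a * Real.log (p s a))
          - ∑ s, ∑ a, c s a * Real.log (π θ s a) := by
    funext θ
    rw [← Finset.sum_sub_distrib]
    refine Finset.sum_congr rfl fun s _ => ?_
    rw [Finset.mul_sum, ← Finset.sum_sub_distrib]
    refine Finset.sum_congr rfl fun a _ => ?_
    rw [Real.log_div (hp s a).ne' (hπpos θ s a).ne']
    have : d s * V s * (p s a * (Real.log (p s a) - Real.log (π θ s a)))
        = (d s * (V s * p s a)) * (Real.log (p s a) - Real.log (π θ s a)) := by ring
    rw [this, hVp]; simp only [hcdef]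
    ring
  rw [hFeq]
  have hdiffsa : ∀ s a, DifferentiableAt ℝ (fun θ => Real.log (π θ s a)) θs :=
    fun s a => ((hπdiff s a) θs).log (hπpos θs s a).ne'
  have hdiffG : ∀ s ∈ Finset.univ, DifferentiableAt ℝ
      (fun θ => ∑ a, c s a * Real.log (π θ s a)) θs := fun s _ =>
    DifferentiableAt.fun_sum fun a _ => ((hdiffsa s a).const_mul _)
  unfold gradient
  rw [fderiv_const_sub, fderiv_fun_sum hdiffG]
  · have hinner : ∀ s ∈ Finset.univ, fderiv ℝ (fun θ => ∑ a, c s a * Real.log (π θ s a)) θs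
        = ∑ a, c s a • fderiv ℝ (fun θ => Real.log (π θ s a)) θs := by
      intro s _
      rw [fderiv_fun_sum fun a _ => (hdiffsa s a).const_mul _]
      exact Finset.sum_congr rfl fun a _ => fderiv_const_mul (hdiffsa s a) _
    rw [Finset.sum_congr rfl hinner, map_neg, map_sum]
    have : ∀ s, (toDual ℝ (EuclideanSpace ℝ (Fin n))).symm
        (∑ a, c s a • fderiv ℝ (fun θ => Real.log (π θ s a)) θs)
        = d s • ∑ a, (Q s a * π θs s a) • gradient (fun θ => Real.log (π θ s a)) θs := by
      intro s
      rw [map_sum, Finset.smul_sum]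
      exact Finset.sum_congr rfl fun a _ => by
        rw [LinearIsometryEquiv.map_smul, smul_smul]; rfl
    rw [Finset.sum_congr rfl fun s _ => this s, hstat, neg_zero]
end
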